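/- Let Σ = {s_ijk} be a multiplier system over a ring R in which every s_ijk is 0 or 1. Then for any pairwise distinct indices i, j, k, exactly one of the following holds for the three elements s_iji, s_jkj, s_kik: (1) all three are equal to 1; (2) exactly two of them are 0 and the third is 1; (3) all three are 0. Equivalently, it is impossible that exactly one of s_iji, s_jkj, s_kik is 0, and impossible that exactly two are 1. -/
import Mathlib

/-- Key step: in a (01)-multiplier system, if `s i j i = 1` and `s j k j = 1`
then `s k i k = 1`. -/
theorem zero_one_multiplier_key {R : Type*} [Ring R] [Nontrivial R] (n : ℕ)
    (s : Fin n → Fin n → Fin n → R)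
    (h1 : ∀ i k, s i i k = 1) (h2 : ∀ i k, s i k k = 1)
    (hmul : ∀ i j k l, s i j k * s i k l = s i j l * s j k l)
    (h01 : ∀ i j k, s i j k = 0 ∨ s i j k = 1)
    (i j k : Fin n) (ha : s i j i = 1) (hb : s j k j = 1) : s k i k = 1 := by
  -- s j k i = 1
  have e1 := hmul j k j i
  rw [hb, h1, one_mul] at e1
  have hjki : s j k i = 1 := by
    rcases h01 j k i with h | h
    · rw [h, zero_mul] at e1; exact absurd e1 one_ne_zero
    · exact h
  -- s j i j = 1
  have e2 := hmul i j i j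
  rw [ha, h1, h2, one_mul, one_mul] at e2
  -- s k i j = 1 (from hmul j k i j)
  have e3 := hmul j k i j
  rw [hjki, hb, ← e2, one_mul, one_mul] at e3
  -- s k j k = 1
  have e4 := hmul j k j k
  rw [hb, h1, h2, one_mul, one_mul] at e4
  -- hmul k i j k : s k i j * s k j k = s k i k * s i j k
  have e5 := hmul k i j k
  rw [← e3, ← e4, one_mul] at e5
  rcases h01 k i k with h | h
  · rw [h, zero_mul] at e5; exact absurd e5 one_ne_zero
  · exact h

/-- Lemma 2.1: In a (01)-multiplier system, for pairwise distinct
`i, j, k`, the triple `(s i j i, s j k j, s k i k)` is either all ones, or has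
exactly one entry `1` and two entries `0`, or is all zeros. -/
theorem zero_one_multiplier_triple {R : Type*} [Ring R] [Nontrivial R] (n : ℕ)
    (s : Fin n → Fin n → Fin n → R)
    (hcent : ∀ i j k (r : R), s i j k * r = r * s i j k)
    (h1 : ∀ i k, s i i k = 1) (h2 : ∀ i k, s i k k = 1)
    (hmul : ∀ i j k l, s i j k * s i k l = s i j l * s j k l)
    (h01 : ∀ i j k, s i j k = 0 ∨ s i j k = 1)
    (i j k : Fin n) (hij : i ≠ j) (hjk : j ≠ k) (hki : k ≠ i) :
    (s i j i = 1 ∧ s j k j = 1 ∧ s k i k = 1) ∨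
    (s i j i = 1 ∧ s j k j = 0 ∧ s k i k = 0) ∨
    (s i j i = 0 ∧ s j k j = 1 ∧ s k i k = 0) ∨
    (s i j i = 0 ∧ s j k j = 0 ∧ s k i k = 1) ∨
    (s i j i = 0 ∧ s j k j = 0 ∧ s k i k = 0) := by
  have K1 := zero_one_multiplier_key n s h1 h2 hmul h01 i j k
  have K2 := zero_one_multiplier_key n s h1 h2 hmul h01 j k i
  have K3 := zero_one_multiplier_key n s h1 h2 hmul h01 k i j
  rcases h01 i j i with ha | ha <;> rcases h01 j k j with hb | hb <;>
    rcases h01 k i k with hc | hc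
  · exact Or.inr (Or.inr (Or.inr (Or.inr ⟨ha, hb, hc⟩)))
  · exact Or.inr (Or.inr (Or.inr (Or.inl ⟨ha, hb, hc⟩)))
  · exact Or.inr (Or.inr (Or.inl ⟨ha, hb, hc⟩))
  · rw [K2 hb hc] at ha; exact absurd ha one_ne_zero
  · exact Or.inr (Or.inl ⟨ha, hb, hc⟩)
  · rw [K3 hc ha] at hb; exact absurd hb one_ne_zero
  · rw [K1 ha hb] at hc; exact absurd hc one_ne_zero
  · exact Or.inl ⟨ha, hb, hc⟩
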